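/- Let I ⊆ ℝ be an open interval with 0 ∉ I, let α, β ∈ ℂ, and let y, z : I → ℂ be differentiable functions satisfying the P_III system with parameters (α, β, 1) in the variable ξ. Define on the reflected interval −I := {−ξ : ξ ∈ I} the functions ỹ(ξ) := −y(−ξ) and z̃(ξ) := 1 − z(−ξ). Then ỹ and z̃ are differentiable on −I and satisfy the P_III system with parameters (α, −β, 1): ξ·ỹ′(ξ) = 2ỹ²z̃ − ỹ² − 2α·ỹ + 2ξ and ξ·z̃′(ξ) = −2ỹz̃² + 2ỹz̃ + 2α·z̃ + (−β) − α. (This is the Bäcklund transformation s₁^R of the third Painlevé equation.) -/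

import Mathlib

/-- The P_III system with parameters `(α, β, c)` in the variable `ξ`. -/
def PIIIsys (α β c : ℂ) (I : Set ℝ) (y z : ℝ → ℂ) : Prop :=
  ∀ ξ ∈ I,
    (ξ : ℂ) * deriv y ξ
      = 2 * (y ξ) ^ 2 * z ξ - (y ξ) ^ 2 - 2 * α * y ξ + 2 * c * (ξ : ℂ) ∧
    (ξ : ℂ) * deriv z ξ
      = -2 * y ξ * (z ξ) ^ 2 + 2 * y ξ * z ξ + 2 * α * z ξ + β - α

theorem PIII_backlund_s1R
    (I : Set ℝ) (hI : IsOpen I) (hI0 : (0 : ℝ) ∉ I)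
    (α β : ℂ) (y z : ℝ → ℂ)
    (hy : DifferentiableOn ℝ y I) (hz : DifferentiableOn ℝ z I)
    (hsys : PIIIsys α β 1 I y z)
    (yt zt : ℝ → ℂ)
    (hyt : yt = fun (ξ : ℝ) => -y (-ξ))
    (hzt : zt = fun (ξ : ℝ) => 1 - z (-ξ)) :
    DifferentiableOn ℝ yt {ξ : ℝ | -ξ ∈ I} ∧
    DifferentiableOn ℝ zt {ξ : ℝ | -ξ ∈ I} ∧
    PIIIsys α (-β) 1 {ξ : ℝ | -ξ ∈ I} yt zt := by
  have hyd : ∀ ξ : ℝ, -ξ ∈ I → DifferentiableAt ℝ y (-ξ) := fun ξ h =>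
    hy.differentiableAt (hI.mem_nhds h)
  have hzd : ∀ ξ : ℝ, -ξ ∈ I → DifferentiableAt ℝ z (-ξ) := fun ξ h =>
    hz.differentiableAt (hI.mem_nhds h)
  have hytd : DifferentiableOn ℝ yt {ξ : ℝ | -ξ ∈ I} := by
    intro ξ hξ
    exact (((hyd ξ hξ).comp ξ (differentiable_neg ξ)).neg).differentiableWithinAt.congr
      (fun x _ => by rw [hyt]; rfl) (by rw [hyt]; rfl)
  have hztd : DifferentiableOn ℝ zt {ξ : ℝ | -ξ ∈ I} := by
    intro ξ hξ
    exact ((differentiableAt_const (1:ℂ)).sub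
      ((hzd ξ hξ).comp ξ (differentiable_neg ξ))).differentiableWithinAt.congr
      (fun x _ => by rw [hzt]; rfl) (by rw [hzt]; rfl)
  refine ⟨hytd, hztd, ?_⟩
  intro ξ hξ
  obtain ⟨h1, h2⟩ := hsys (-ξ) hξ
  have hd1 : deriv yt ξ = deriv y (-ξ) := by
    rw [hyt, deriv.fun_neg, deriv_comp_neg, neg_neg]
  have hd2 : deriv zt ξ = deriv z (-ξ) := by
    rw [hzt]
    have : (fun ξ : ℝ => 1 - z (-ξ)) = fun ξ : ℝ => (1 : ℂ) + -(z (-ξ)) := by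
      ext x; ring
    rw [this, deriv_const_add, deriv.fun_neg, deriv_comp_neg, neg_neg]
  have hcast : ((-ξ : ℝ) : ℂ) = -(ξ : ℂ) := by push_cast; ring
  rw [hcast] at h1 h2
  constructor
  · rw [hd1, hyt, hzt]
    simp only [neg_neg]
    have : (ξ : ℂ) * deriv y (-ξ) = -(-(ξ:ℂ) * deriv y (-ξ)) := by ring
    rw [this, h1]; ring
  · rw [hd2, hyt, hzt]
    simp only [neg_neg]
    have : (ξ : ℂ) * deriv z (-ξ) = -(-(ξ:ℂ) * deriv z (-ξ)) := by ring
    rw [this, h2]; ring
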